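/- Let X and Y be independent exponential random variables with means m_x > 0 and m_y > 0, and define E₁(a) = ∫_a^∞ (exp(−t)/t) dt for a > 0. If m_x ≠ m_y, then E[ln(1 + X/(Y + 1))] = ( m_x/(m_x − m_y) )·( exp(1/m_x)·E₁(1/m_x) − exp(1/m_y)·E₁(1/m_y) ). If m_x = m_y, then E[ln(1 + X/(Y + 1))] = 1 − (1/m_x)·exp(1/m_x)·E₁(1/m_x). -/

import Mathlib

open MeasureTheory ProbabilityTheory Real Set Filter Topology
open scoped ENNReal NNReal

noncomputable def gE (a : ℝ) : ℝ := ∫ t in Set.Ioi a, Real.exp (-t) / t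

lemma gE_integrableOn {a : ℝ} (ha : 0 < a) :
    IntegrableOn (fun t => rexp (-t) / t) (Ioi a) := by
  have h1 : IntegrableOn (fun t => a⁻¹ * rexp (-1 * t)) (Ioi a) :=
    (exp_neg_integrableOn_Ioi a one_pos).const_mul _
  refine h1.mono' ?_ ?_
  · exact ((Real.measurable_exp.comp measurable_neg).div measurable_id).aestronglyMeasurable
  · filter_upwards [ae_restrict_mem measurableSet_Ioi] with t ht
    have h0 : (0:ℝ) < t := ha.trans ht
    rw [Real.norm_eq_abs, abs_of_nonneg (by positivity)]
    have : rexp (-t) / t ≤ rexp (-t) / a :=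
      div_le_div_of_nonneg_left (le_of_lt (exp_pos _)) ha (le_of_lt ht)
    calc rexp (-t) / t ≤ rexp (-t) / a := this
    _ = a⁻¹ * rexp (-1 * t) := by rw [neg_one_mul, div_eq_mul_inv, mul_comm]

lemma gE_nonneg {a : ℝ} (ha : 0 < a) : 0 ≤ gE a := by
  apply setIntegral_nonneg measurableSet_Ioi
  intro t ht
  have : (0:ℝ) < t := ha.trans ht
  positivity

lemma gE_le {a : ℝ} (ha : 0 < a) : gE a ≤ rexp (-a) / a := by
  have h : gE a ≤ ∫ t in Ioi a, rexp (-t) * a⁻¹ := by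
    apply setIntegral_mono_on (gE_integrableOn ha)
      (((exp_neg_integrableOn_Ioi a one_pos).congr_fun (by intro x _; simp) measurableSet_Ioi).mul_const _)
      measurableSet_Ioi
    intro t ht
    have h0 : (0:ℝ) < t := ha.trans ht
    rw [div_eq_mul_inv]
    exact mul_le_mul_of_nonneg_left (inv_anti₀ ha (le_of_lt ht)) (le_of_lt (exp_pos _))
  rwa [integral_mul_const, integral_exp_neg_Ioi, ← div_eq_mul_inv] at h

lemma gE_tendsto_zero : Tendsto gE atTop (𝓝 0) := by
  have hub : Tendsto (fun a => rexp (-a)) atTop (𝓝 0) := tendsto_exp_neg_atTop_nhds_zero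
  apply tendsto_of_tendsto_of_tendsto_of_le_of_le' tendsto_const_nhds hub
  · filter_upwards [eventually_gt_atTop 0] with a ha using gE_nonneg ha
  · filter_upwards [eventually_ge_atTop 1] with a ha
    calc gE a ≤ rexp (-a) / a := gE_le (lt_of_lt_of_le one_pos ha)
    _ ≤ rexp (-a) / 1 := by
        apply div_le_div_of_nonneg_left (le_of_lt (exp_pos _)) one_pos ha
    _ = rexp (-a) := div_one _

lemma gE_eq_intervalIntegral {x b : ℝ} (hx : 0 < x) (hxb : x ≤ b) :
    gE x = (∫ t in x..b, rexp (-t) / t) + gE b := by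
  have hb : 0 < b := lt_of_lt_of_le hx hxb
  rw [intervalIntegral.integral_of_le hxb, gE, gE]
  rw [← Set.Ioc_union_Ioi_eq_Ioi hxb]
  rw [setIntegral_union (Set.Ioc_disjoint_Ioi le_rfl) measurableSet_Ioi
    ((gE_integrableOn hx).mono_set Set.Ioc_subset_Ioi_self) (gE_integrableOn hb)]

lemma gE_hasDerivAt {a : ℝ} (ha : 0 < a) : HasDerivAt gE (-(rexp (-a) / a)) a := by
  set b := a + 1 with hb
  have hab : a < b := by simp [hb]
  have hcont : ContinuousAt (fun t => rexp (-t) / t) a :=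
    ((Real.continuous_exp.comp continuous_neg).continuousAt).div continuousAt_id (ne_of_gt ha)
  have hii : IntervalIntegrable (fun t => rexp (-t) / t) volume a b := by
    rw [intervalIntegrable_iff_integrableOn_Ioc_of_le (le_of_lt hab)]
    exact (gE_integrableOn ha).mono_set Set.Ioc_subset_Ioi_self
  have hd : HasDerivAt (fun u => (∫ t in u..b, rexp (-t) / t) + gE b) (-(rexp (-a) / a)) a :=
    (intervalIntegral.integral_hasDerivAt_left hii
      (((Real.measurable_exp.comp measurable_neg).div
        measurable_id).stronglyMeasurable.stronglyMeasurableAtFilter) hcont).add_const _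
  apply hd.congr_of_eventuallyEq
  have hmem : Set.Ioo (0:ℝ) b ∈ 𝓝 a := Ioo_mem_nhds ha hab
  filter_upwards [hmem] with x hx
  exact gE_eq_intervalIntegral hx.1 (le_of_lt hx.2)

lemma tendsto_exp_neg_mul {c : ℝ} (hc : 0 < c) :
    Tendsto (fun x => rexp (-(c * x))) atTop (𝓝 0) := by
  have hmul : Tendsto (fun x : ℝ => c * x) atTop atTop := Tendsto.const_mul_atTop hc tendsto_id
  exact tendsto_exp_neg_atTop_nhds_zero.comp hmul

lemma integrableOn_of_expbound {fn : ℝ → ℝ} {c C : ℝ} (hc : 0 < c)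
    (hm : AEStronglyMeasurable fn (volume.restrict (Ioi 0)))
    (hb : ∀ x ∈ Ioi (0:ℝ), ‖fn x‖ ≤ C * rexp (-(c * x))) :
    IntegrableOn fn (Ioi 0) := by
  have hC : IntegrableOn (fun x => C * rexp (-(c * x))) (Ioi 0) := by
    have := (exp_neg_integrableOn_Ioi 0 hc).const_mul C
    simp only [neg_mul] at this; exact this
  refine hC.mono' hm ?_
  filter_upwards [ae_restrict_mem measurableSet_Ioi] with x hx
  exact hb x hx

lemma log_le_div {s x : ℝ} (hs : 0 < s) (hx : 0 ≤ x) : Real.log (1 + x / s) ≤ x / s := by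
  have h := Real.log_le_sub_one_of_pos (show (0:ℝ) < 1 + x / s by positivity)
  linarith

lemma le_exp_half {r x : ℝ} (hr : 0 < r) (hx : 0 ≤ x) : x ≤ (2 / r) * rexp (r / 2 * x) := by
  have h := Real.add_one_le_exp (r / 2 * x)
  have h2 : r / 2 * x ≤ rexp (r / 2 * x) := by linarith
  calc x = (2 / r) * (r / 2 * x) := by field_simp
  _ ≤ (2 / r) * rexp (r / 2 * x) := by
      apply mul_le_mul_of_nonneg_left h2 (by positivity)

lemma inner_bound {r s x : ℝ} (hr : 0 < r) (hs : 0 < s) (hx : 0 ≤ x) :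
    ‖Real.log (1 + x / s) * (r * rexp (-(r * x)))‖ ≤ (2 / s) * rexp (-(r / 2 * x)) := by
  have hlog0 : 0 ≤ Real.log (1 + x / s) := Real.log_nonneg (by have := div_nonneg hx hs.le; linarith)
  rw [Real.norm_eq_abs, abs_of_nonneg (mul_nonneg hlog0 (by positivity))]
  calc Real.log (1 + x / s) * (r * rexp (-(r * x)))
      ≤ (x / s) * (r * rexp (-(r * x))) := by
        exact mul_le_mul_of_nonneg_right (log_le_div hs hx)
          (by positivity)
    _ ≤ ((2 / r) * rexp (r / 2 * x) / s) * (r * rexp (-(r * x))) := by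
        apply mul_le_mul_of_nonneg_right _ (by positivity)
        apply div_le_div_of_nonneg_right (le_exp_half hr hx) hs.le
    _ = (2 / s) * (rexp (r / 2 * x) * rexp (-(r * x))) := by field_simp
    _ = (2 / s) * rexp (-(r / 2 * x)) := by rw [← Real.exp_add]; ring_nf

lemma hasDerivAt_exp_neg_mul (r x : ℝ) :
    HasDerivAt (fun y => rexp (-(r * y))) (rexp (-(r * x)) * (-r)) x := by
  have h : HasDerivAt (fun y : ℝ => -(r * y)) (-r) x := by
    exact (((hasDerivAt_id x).const_mul r).neg).congr_deriv (by ring)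
  exact h.exp

lemma hasDerivAt_log_aux {s : ℝ} (hs : 0 < s) (x : ℝ) (hx : 0 ≤ x) :
    HasDerivAt (fun y => Real.log (1 + y / s)) (1 / (s + x)) x := by
  have h : HasDerivAt (fun y : ℝ => 1 + y / s) (1 / s) x := by
    simpa [one_div] using ((hasDerivAt_id x).div_const s).const_add 1
  have h2 := h.log (by positivity)
  convert h2 using 1
  field_simp

lemma hasDerivAt_gE_comp {r s : ℝ} (hr : 0 < r) {x : ℝ} (hsx : 0 < s + x) :
    HasDerivAt (fun y => gE (r * (s + y)))
      (-(rexp (-(r * (s + x))) / (r * (s + x))) * r) x := by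
  have hin : HasDerivAt (fun y : ℝ => r * (s + y)) r x := by
    simpa using ((hasDerivAt_id x).const_add s).const_mul r
  exact (gE_hasDerivAt (by positivity)).comp x hin

lemma integral_log_inner {r s : ℝ} (hr : 0 < r) (hs : 0 < s) :
    ∫ x in Ioi (0:ℝ), Real.log (1 + x / s) * (r * rexp (-(r * x)))
      = rexp (r * s) * gE (r * s) := by
  set F : ℝ → ℝ := fun x =>
    -rexp (-(r * x)) * Real.log (1 + x / s) - rexp (r * s) * gE (r * (s + x)) with hF
  have hderiv : ∀ x ∈ Ici (0:ℝ), HasDerivAt F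
      (Real.log (1 + x / s) * (r * rexp (-(r * x)))) x := by
    intro x hx
    have hx0 : (0:ℝ) ≤ x := hx
    have hsx : 0 < s + x := by linarith
    have h1 := ((hasDerivAt_exp_neg_mul r x).neg).mul (hasDerivAt_log_aux hs x hx0)
    have h2 := (hasDerivAt_gE_comp hr hsx (s := s)).const_mul (rexp (r * s))
    have h3 := h1.sub h2
    refine h3.congr_deriv ?_
    have hkey : rexp (r * s) * rexp (-(r * (s + x))) = rexp (-(r * x)) := by
      rw [← Real.exp_add]; ring_nf
    have h4 : rexp (r * s) * (-(rexp (-(r * (s + x))) / (r * (s + x))) * r)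
        = -(rexp (-(r * x)) / (s + x)) := by
      field_simp
      linear_combination (-1) * hkey
    rw [h4]
    simp only [Pi.neg_apply]
    have h5 : -rexp (-(r * x)) * (1 / (s + x)) = -(rexp (-(r * x)) / (s + x)) := by
      field_simp
    rw [h5]
    ring
  have hint : IntegrableOn (fun x => Real.log (1 + x / s) * (r * rexp (-(r * x)))) (Ioi 0) := by
    apply integrableOn_of_expbound (by positivity : (0:ℝ) < r / 2)
    · apply ContinuousOn.aestronglyMeasurable _ measurableSet_Ioi
      apply ContinuousOn.mul
      · apply ContinuousOn.log
        · fun_prop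
        · intro x hx
          have : (0:ℝ) < x := hx
          positivity
      · fun_prop
    · intro x hx
      exact inner_bound hr hs (le_of_lt hx)
  have htendF : Tendsto F atTop (𝓝 0) := by
    have t1 : Tendsto (fun x => rexp (-(r * x)) * Real.log (1 + x / s)) atTop (𝓝 0) := by
      apply squeeze_zero' (g := fun x => (2 / (s * r)) * rexp (-(r / 2 * x)))
      · filter_upwards [eventually_ge_atTop 0] with x hx
        exact mul_nonneg (exp_pos _).le (Real.log_nonneg (by have := div_nonneg hx hs.le; linarith))
      · filter_upwards [eventually_ge_atTop 0] with x hx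
        calc rexp (-(r * x)) * Real.log (1 + x / s)
            ≤ rexp (-(r * x)) * (x / s) := by
              exact mul_le_mul_of_nonneg_left (log_le_div hs hx) (exp_pos _).le
          _ ≤ rexp (-(r * x)) * ((2 / r) * rexp (r / 2 * x) / s) := by
              apply mul_le_mul_of_nonneg_left _ (exp_pos _).le
              exact div_le_div_of_nonneg_right (le_exp_half hr hx) hs.le
          _ = (2 / (s * r)) * (rexp (-(r * x)) * rexp (r / 2 * x)) := by field_simp
          _ = (2 / (s * r)) * rexp (-(r / 2 * x)) := by rw [← Real.exp_add]; ring_nf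
      · rw [show (0:ℝ) = (2 / (s * r)) * 0 by ring]
        exact (tendsto_exp_neg_mul (by positivity)).const_mul _
    have t2 : Tendsto (fun x => rexp (r * s) * gE (r * (s + x))) atTop (𝓝 0) := by
      rw [show (0:ℝ) = rexp (r * s) * 0 by ring]
      apply Tendsto.const_mul
      exact gE_tendsto_zero.comp (Tendsto.const_mul_atTop hr (tendsto_atTop_add_const_left _ s tendsto_id))
    simpa [hF, neg_mul] using (t1.neg).sub t2
  have := integral_Ioi_of_hasDerivAt_of_tendsto' hderiv hint htendF
  rw [this]
  have hF0 : F 0 = -(rexp (r * s) * gE (r * s)) := by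
    simp [hF]
  rw [hF0]
  ring

lemma exp_gE_le {a : ℝ} (ha : 0 < a) : rexp a * gE a ≤ 1 / a := by
  calc rexp a * gE a ≤ rexp a * (rexp (-a) / a) :=
        mul_le_mul_of_nonneg_left (gE_le ha) (exp_pos _).le
    _ = 1 / a := by rw [Real.exp_neg]; field_simp

lemma exp_gE_nonneg {a : ℝ} (ha : 0 < a) : 0 ≤ rexp a * gE a :=
  mul_nonneg (exp_pos _).le (gE_nonneg ha)

lemma hasDerivAt_phi {r1 : ℝ} (hr1 : 0 < r1) {y : ℝ} (hy : 0 ≤ y) :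
    HasDerivAt (fun y => rexp (r1 * (y + 1)) * gE (r1 * (y + 1)))
      (r1 * (rexp (r1 * (y + 1)) * gE (r1 * (y + 1))) - 1 / (y + 1)) y := by
  have hy1 : (0:ℝ) < y + 1 := by linarith
  have ha : (0:ℝ) < r1 * (y + 1) := by positivity
  have hin : HasDerivAt (fun y : ℝ => r1 * (y + 1)) r1 y := by
    simpa using ((hasDerivAt_id y).add_const 1).const_mul r1
  have h1 : HasDerivAt (fun y => rexp (r1 * (y + 1))) (rexp (r1 * (y + 1)) * r1) y := hin.exp
  have h2 : HasDerivAt (fun y => gE (r1 * (y + 1)))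
      (-(rexp (-(r1 * (y + 1))) / (r1 * (y + 1))) * r1) y :=
    by exact (gE_hasDerivAt ha).comp y hin
  have h3 := h1.mul h2
  refine h3.congr_deriv ?_
  rw [Real.exp_neg]
  field_simp
  ring

lemma phi_continuousOn {r1 : ℝ} (hr1 : 0 < r1) :
    ContinuousOn (fun y => rexp (r1 * (y + 1)) * gE (r1 * (y + 1))) (Ioi 0) := by
  intro y hy
  exact ((hasDerivAt_phi hr1 (le_of_lt hy)).continuousAt).continuousWithinAt

lemma phi_tendsto_aux {r1 r2 : ℝ} (hr1 : 0 < r1) (hr2 : 0 < r2) :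
    Tendsto (fun y => rexp (r1 * (y + 1)) * gE (r1 * (y + 1)) * rexp (-(r2 * y)))
      atTop (𝓝 0) := by
  apply squeeze_zero'
  · filter_upwards [eventually_ge_atTop 0] with y hy
    exact mul_nonneg (exp_gE_nonneg (by positivity)) (exp_pos _).le
  · filter_upwards [eventually_ge_atTop 0] with y hy
    calc rexp (r1 * (y + 1)) * gE (r1 * (y + 1)) * rexp (-(r2 * y))
        ≤ (1 / (r1 * (y + 1))) * rexp (-(r2 * y)) := by
          apply mul_le_mul_of_nonneg_right (exp_gE_le (by positivity)) (exp_pos _).le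
      _ ≤ (1 / r1) * rexp (-(r2 * y)) := by
          apply mul_le_mul_of_nonneg_right _ (exp_pos _).le
          apply div_le_div_of_nonneg_left one_pos.le hr1
          nlinarith
  · rw [show (0:ℝ) = (1 / r1) * 0 by ring]
    exact (tendsto_exp_neg_mul hr2).const_mul _

lemma outer_ne {r1 r2 : ℝ} (hr1 : 0 < r1) (hr2 : 0 < r2) (hne : r1 ≠ r2) :
    ∫ y in Ioi (0:ℝ), (rexp (r1 * (y + 1)) * gE (r1 * (y + 1))) * (r2 * rexp (-(r2 * y)))
      = (r2 / (r2 - r1)) * (rexp r1 * gE r1 - rexp r2 * gE r2) := by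
  set c : ℝ := r2 / (r1 - r2) with hc
  have hsub : r1 - r2 ≠ 0 := sub_ne_zero.mpr hne
  set A : ℝ → ℝ := fun y =>
    c * ((rexp (r1 * (y + 1)) * gE (r1 * (y + 1))) * rexp (-(r2 * y)))
      - c * rexp r2 * gE (r2 * (y + 1)) with hA
  have hderiv : ∀ y ∈ Ici (0:ℝ), HasDerivAt A
      ((rexp (r1 * (y + 1)) * gE (r1 * (y + 1))) * (r2 * rexp (-(r2 * y)))) y := by
    intro y hy
    have hy0 : (0:ℝ) ≤ y := hy
    have hy1 : (0:ℝ) < y + 1 := by linarith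
    have hin2 : HasDerivAt (fun y : ℝ => r2 * (y + 1)) r2 y := by
      simpa using ((hasDerivAt_id y).add_const 1).const_mul r2
    have h1 := ((hasDerivAt_phi hr1 hy0).mul (hasDerivAt_exp_neg_mul r2 y)).const_mul c
    have h2 := (((gE_hasDerivAt (by positivity : (0:ℝ) < r2 * (y + 1))).comp y hin2).const_mul
      (c * rexp r2))
    have h3 := h1.sub h2
    refine h3.congr_deriv ?_
    have hkey : rexp r2 * rexp (-(r2 * (y + 1))) = rexp (-(r2 * y)) := by
      rw [← Real.exp_add]; ring_nf
    rw [← hkey, hc]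
    field_simp
    ring
  have hint : IntegrableOn
      (fun y => (rexp (r1 * (y + 1)) * gE (r1 * (y + 1))) * (r2 * rexp (-(r2 * y)))) (Ioi 0) := by
    apply integrableOn_of_expbound hr2
    · exact ((phi_continuousOn hr1).mul (by fun_prop)).aestronglyMeasurable measurableSet_Ioi
    · intro y hy
      have hy0 : (0:ℝ) < y := hy
      have hy1 : (0:ℝ) < y + 1 := by linarith
      rw [Real.norm_eq_abs, abs_of_nonneg (mul_nonneg (exp_gE_nonneg (by positivity)) (by positivity))]
      calc (rexp (r1 * (y + 1)) * gE (r1 * (y + 1))) * (r2 * rexp (-(r2 * y)))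
          ≤ (1 / (r1 * (y + 1))) * (r2 * rexp (-(r2 * y))) :=
            mul_le_mul_of_nonneg_right (exp_gE_le (by positivity)) (by positivity)
        _ ≤ (1 / r1) * (r2 * rexp (-(r2 * y))) := by
            apply mul_le_mul_of_nonneg_right _ (by positivity)
            apply div_le_div_of_nonneg_left one_pos.le hr1
            nlinarith
        _ = (r2 / r1) * rexp (-(r2 * y)) := by ring
  have htendA : Tendsto A atTop (𝓝 0) := by
    have t1 := (phi_tendsto_aux hr1 hr2).const_mul c
    have t2 : Tendsto (fun y => c * rexp r2 * gE (r2 * (y + 1))) atTop (𝓝 0) := by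
      rw [show (0:ℝ) = (c * rexp r2) * 0 by ring]
      apply Tendsto.const_mul
      exact gE_tendsto_zero.comp (Tendsto.const_mul_atTop hr2
        (tendsto_atTop_add_const_right atTop 1 tendsto_id))
    simpa [hA] using t1.sub t2
  have hFTC := integral_Ioi_of_hasDerivAt_of_tendsto' hderiv hint htendA
  rw [hFTC]
  have hA0 : A 0 = c * (rexp r1 * gE r1) - c * rexp r2 * gE r2 := by
    simp [hA]
  rw [hA0, hc]
  have hsub2 : r2 - r1 ≠ 0 := sub_ne_zero.mpr (Ne.symm hne)
  field_simp
  ring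

lemma outer_eq {r : ℝ} (hr : 0 < r) :
    ∫ y in Ioi (0:ℝ), (rexp (r * (y + 1)) * gE (r * (y + 1))) * (r * rexp (-(r * y)))
      = 1 - r * (rexp r * gE r) := by
  set A : ℝ → ℝ := fun y =>
    r * (y + 1) * (rexp (r * (y + 1)) * gE (r * (y + 1))) * rexp (-(r * y)) - rexp (-(r * y))
    with hA
  have hderiv : ∀ y ∈ Ici (0:ℝ), HasDerivAt A
      ((rexp (r * (y + 1)) * gE (r * (y + 1))) * (r * rexp (-(r * y)))) y := by
    intro y hy
    have hy0 : (0:ℝ) ≤ y := hy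
    have hy1 : (0:ℝ) < y + 1 := by linarith
    have hlin : HasDerivAt (fun y : ℝ => r * (y + 1)) r y := by
      simpa using ((hasDerivAt_id y).add_const 1).const_mul r
    have h1 := (hlin.mul (hasDerivAt_phi hr hy0)).mul (hasDerivAt_exp_neg_mul r y)
    have h2 := h1.sub (hasDerivAt_exp_neg_mul r y)
    refine h2.congr_deriv ?_
    simp only [Pi.mul_apply]
    field_simp
    ring
  have hint : IntegrableOn
      (fun y => (rexp (r * (y + 1)) * gE (r * (y + 1))) * (r * rexp (-(r * y)))) (Ioi 0) := by
    apply integrableOn_of_expbound hr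
    · exact ((phi_continuousOn hr).mul (by fun_prop)).aestronglyMeasurable measurableSet_Ioi
    · intro y hy
      have hy0 : (0:ℝ) < y := hy
      have hy1 : (0:ℝ) < y + 1 := by linarith
      rw [Real.norm_eq_abs, abs_of_nonneg (mul_nonneg (exp_gE_nonneg (by positivity)) (by positivity))]
      calc (rexp (r * (y + 1)) * gE (r * (y + 1))) * (r * rexp (-(r * y)))
          ≤ (1 / (r * (y + 1))) * (r * rexp (-(r * y))) :=
            mul_le_mul_of_nonneg_right (exp_gE_le (by positivity)) (by positivity)
        _ ≤ (1 / r) * (r * rexp (-(r * y))) := by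
            apply mul_le_mul_of_nonneg_right _ (by positivity)
            apply div_le_div_of_nonneg_left one_pos.le hr
            nlinarith
        _ = 1 * rexp (-(r * y)) := by field_simp
  have htendA : Tendsto A atTop (𝓝 0) := by
    have t1 : Tendsto (fun y => r * (y + 1) * (rexp (r * (y + 1)) * gE (r * (y + 1)))
        * rexp (-(r * y))) atTop (𝓝 0) := by
      apply squeeze_zero'
      · filter_upwards [eventually_ge_atTop 0] with y hy
        have hy1 : (0:ℝ) < y + 1 := by linarith
        exact mul_nonneg (mul_nonneg (by positivity) (exp_gE_nonneg (by positivity))) (exp_pos _).le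
      · filter_upwards [eventually_ge_atTop 0] with y hy
        have hy1 : (0:ℝ) < y + 1 := by linarith
        calc r * (y + 1) * (rexp (r * (y + 1)) * gE (r * (y + 1))) * rexp (-(r * y))
            ≤ r * (y + 1) * (1 / (r * (y + 1))) * rexp (-(r * y)) := by
              apply mul_le_mul_of_nonneg_right _ (exp_pos _).le
              exact mul_le_mul_of_nonneg_left (exp_gE_le (by positivity)) (by positivity)
          _ = rexp (-(r * y)) := by field_simp
      · exact tendsto_exp_neg_mul hr
    have t2 := tendsto_exp_neg_mul hr
    simpa [hA] using t1.sub t2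
  have hFTC := integral_Ioi_of_hasDerivAt_of_tendsto' hderiv hint htendA
  rw [hFTC]
  have hA0 : A 0 = r * (rexp r * gE r) - 1 := by
    simp [hA]
  rw [hA0]
  ring

lemma expMeasure_eq_withDensity (r : ℝ) :
    expMeasure r = volume.withDensity (fun x => ((exponentialPDFReal r x).toNNReal : ℝ≥0∞)) := by
  rfl

lemma expMeasure_integral {r : ℝ} (hr : 0 < r) (h : ℝ → ℝ) :
    ∫ x, h x ∂(expMeasure r) = ∫ x in Ioi 0, h x * (r * rexp (-(r * x))) := by
  rw [expMeasure_eq_withDensity,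
    integral_withDensity_eq_integral_smul ((measurable_exponentialPDFReal r).real_toNNReal) h]
  have step1 : ∀ x : ℝ, (exponentialPDFReal r x).toNNReal • h x = exponentialPDFReal r x * h x := by
    intro x
    rw [NNReal.smul_def, Real.coe_toNNReal _ (exponentialPDFReal_nonneg hr x), smul_eq_mul]
  simp_rw [step1]
  have hzero : ∀ x ∉ Ici (0:ℝ), exponentialPDFReal r x * h x = 0 := by
    intro x hx
    have hx' : x < 0 := by simpa using hx
    simp only [exponentialPDFReal, gammaPDFReal, if_neg (not_le.mpr hx'), zero_mul]
  rw [← setIntegral_eq_integral_of_forall_compl_eq_zero hzero, integral_Ici_eq_integral_Ioi]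
  apply setIntegral_congr_fun measurableSet_Ioi
  intro x hx
  have hx0 : (0:ℝ) ≤ x := le_of_lt hx
  simp only [exponentialPDFReal, gammaPDFReal, if_pos hx0]
  simp [Real.Gamma_one]
  ring

lemma expMeasure_ae_nonneg {r : ℝ} (hr : 0 < r) : ∀ᵐ x ∂(expMeasure r), 0 ≤ x := by
  rw [ae_iff]
  have hset : {x : ℝ | ¬0 ≤ x} = Iio 0 := by ext x; simp
  rw [hset, expMeasure, gammaMeasure, withDensity_apply _ measurableSet_Iio]
  exact lintegral_gammaPDF_of_nonpos le_rfl

lemma integrable_abs_expMeasure {r : ℝ} (hr : 0 < r) :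
    Integrable (fun x => |x|) (expMeasure r) := by
  rw [expMeasure_eq_withDensity,
    integrable_withDensity_iff ((measurable_exponentialPDFReal r).real_toNNReal.coe_nnreal_ennreal)
      (Eventually.of_forall (fun x => ENNReal.coe_lt_top))]
  have heq : ∀ x : ℝ, |x| * (((exponentialPDFReal r x).toNNReal : ℝ≥0∞)).toReal
      = |x| * exponentialPDFReal r x := by
    intro x
    rw [ENNReal.coe_toReal, Real.coe_toNNReal _ (exponentialPDFReal_nonneg hr x)]
  simp_rw [heq]
  rw [← integrableOn_univ, ← Set.Iic_union_Ioi (a := (0:ℝ))]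
  apply IntegrableOn.union
  · apply (integrableOn_zero (s := Iic 0)).congr_fun _ measurableSet_Iic
    intro x hx
    rcases lt_or_eq_of_le (show x ≤ 0 from hx) with h | h
    · simp only [exponentialPDFReal, gammaPDFReal, if_neg (not_le.mpr h), mul_zero]
    · simp [h, abs_of_nonpos]
  · apply integrableOn_of_expbound (show (0:ℝ) < r / 2 by positivity)
    · exact (measurable_abs.mul (measurable_exponentialPDFReal r)).aestronglyMeasurable
    · intro x hx
      have hx0 : (0:ℝ) < x := hx
      have hpdf : exponentialPDFReal r x = r * rexp (-(r * x)) := by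
        simp only [exponentialPDFReal, gammaPDFReal, if_pos hx0.le]
        norm_num [Real.Gamma_one]
      rw [hpdf, abs_of_nonneg hx0.le, Real.norm_eq_abs, abs_of_nonneg (by positivity)]
      calc x * (r * rexp (-(r * x)))
          ≤ ((2 / r) * rexp (r / 2 * x)) * (r * rexp (-(r * x))) :=
            mul_le_mul_of_nonneg_right (le_exp_half hr hx0.le) (by positivity)
        _ = 2 * (rexp (r / 2 * x) * rexp (-(r * x))) := by field_simp
        _ = 2 * rexp (-(r / 2 * x)) := by rw [← Real.exp_add]; ring_nf

theorem T2_ergodic_eavesdropping_rate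
    {Ω : Type*} [MeasurableSpace Ω] (μ : Measure Ω) [IsProbabilityMeasure μ]
    (X Y : Ω → ℝ) (hXm : Measurable X) (hYm : Measurable Y)
    (hindep : IndepFun X Y μ)
    (mx my : ℝ) (hmx : 0 < mx) (hmy : 0 < my)
    (hX : Measure.map X μ = expMeasure mx⁻¹)
    (hY : Measure.map Y μ = expMeasure my⁻¹)
    (E₁ : ℝ → ℝ) (hE₁ : ∀ a, 0 < a → E₁ a = ∫ t in Set.Ioi a, Real.exp (-t) / t) :
    (mx ≠ my →
      (∫ ω, Real.log (1 + X ω / (Y ω + 1)) ∂μ) =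
        (mx / (mx - my)) * (Real.exp (1 / mx) * E₁ (1 / mx)
          - Real.exp (1 / my) * E₁ (1 / my))) ∧
    (mx = my →
      (∫ ω, Real.log (1 + X ω / (Y ω + 1)) ∂μ) =
        1 - (1 / mx) * Real.exp (1 / mx) * E₁ (1 / mx)) := by
  have hrx : (0:ℝ) < mx⁻¹ := inv_pos.mpr hmx
  have hry : (0:ℝ) < my⁻¹ := inv_pos.mpr hmy
  set ν := expMeasure mx⁻¹ with hν
  set ρ := expMeasure my⁻¹ with hρ
  have hνp : IsProbabilityMeasure ν := isProbabilityMeasure_expMeasure hrx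
  have hρp : IsProbabilityMeasure ρ := isProbabilityMeasure_expMeasure hry
  have hgE : ∀ a : ℝ, 0 < a → E₁ a = gE a := fun a ha => by rw [hE₁ a ha]; rfl
  have hfmeas : Measurable (fun p : ℝ × ℝ => Real.log (1 + p.1 / (p.2 + 1))) :=
    Real.measurable_log.comp
      (measurable_const.add (measurable_fst.div (measurable_snd.add_const 1)))
  have hprod : μ.map (fun ω => (X ω, Y ω)) = ν.prod ρ := by
    rw [← hX, ← hY]
    exact (indepFun_iff_map_prod_eq_prod_map_map hXm.aemeasurable hYm.aemeasurable).mp hindep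
  have hIio : ∀ {r : ℝ}, 0 < r → expMeasure r (Iio 0) = 0 := by
    intro r hr
    rw [expMeasure, gammaMeasure, withDensity_apply _ measurableSet_Iio]
    exact lintegral_gammaPDF_of_nonpos le_rfl
  have hae1 : ∀ᵐ p : ℝ × ℝ ∂(ν.prod ρ), 0 ≤ p.1 := by
    rw [ae_iff]
    have hset : {p : ℝ × ℝ | ¬0 ≤ p.1} = (Iio 0) ×ˢ (univ : Set ℝ) := by
      ext p; simp [not_le]
    rw [hset, Measure.prod_prod, hν, hIio hrx, zero_mul]
  have hae2 : ∀ᵐ p : ℝ × ℝ ∂(ν.prod ρ), 0 ≤ p.2 := by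
    rw [ae_iff]
    have hset : {p : ℝ × ℝ | ¬0 ≤ p.2} = (univ : Set ℝ) ×ˢ (Iio 0) := by
      ext p; simp [not_le]
    rw [hset, Measure.prod_prod, hρ, hIio hry, mul_zero]
  have hInt : Integrable (fun p : ℝ × ℝ => Real.log (1 + p.1 / (p.2 + 1))) (ν.prod ρ) := by
    have hmapfst : (ν.prod ρ).map Prod.fst = ν := by
      rw [Measure.map_fst_prod]
      simp
    have habs : Integrable (fun p : ℝ × ℝ => |p.1|) (ν.prod ρ) := by
      have h1 := integrable_abs_expMeasure hrx
      rw [← hν, ← hmapfst] at h1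
      exact (integrable_map_measure measurable_abs.aestronglyMeasurable
        measurable_fst.aemeasurable).mp h1
    apply habs.mono' hfmeas.aestronglyMeasurable
    filter_upwards [hae1, hae2] with p hp1 hp2
    have hp21 : (0:ℝ) < p.2 + 1 := by linarith
    have hlog0 : 0 ≤ Real.log (1 + p.1 / (p.2 + 1)) :=
      Real.log_nonneg (by have := div_nonneg hp1 hp21.le; linarith)
    rw [Real.norm_eq_abs, abs_of_nonneg hlog0]
    calc Real.log (1 + p.1 / (p.2 + 1)) ≤ p.1 / (p.2 + 1) := log_le_div hp21 hp1
      _ ≤ p.1 := div_le_self hp1 (by linarith)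
      _ ≤ |p.1| := le_abs_self _
  have key : (∫ ω, Real.log (1 + X ω / (Y ω + 1)) ∂μ)
      = ∫ y in Ioi (0:ℝ),
          (rexp (mx⁻¹ * (y + 1)) * gE (mx⁻¹ * (y + 1))) * (my⁻¹ * rexp (-(my⁻¹ * y))) := by
    have h1 : ∫ p : ℝ × ℝ, Real.log (1 + p.1 / (p.2 + 1)) ∂(ν.prod ρ)
        = ∫ ω, Real.log (1 + X ω / (Y ω + 1)) ∂μ := by
      rw [← hprod]
      exact integral_map (hXm.prodMk hYm).aemeasurable hfmeas.aestronglyMeasurable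
    have h2 := integral_prod_symm (fun p : ℝ × ℝ => Real.log (1 + p.1 / (p.2 + 1))) hInt
    have h3 : ∫ y, (∫ x, Real.log (1 + x / (y + 1)) ∂ν) ∂ρ
        = ∫ y, rexp (mx⁻¹ * (y + 1)) * gE (mx⁻¹ * (y + 1)) ∂ρ := by
      apply integral_congr_ae
      have haeρ : ∀ᵐ y ∂ρ, 0 ≤ y := by
        rw [ae_iff]
        have hset : {y : ℝ | ¬0 ≤ y} = Iio 0 := by ext y; simp [not_le]
        rw [hset, hρ]
        exact hIio hry
      filter_upwards [haeρ] with y hy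
      have hy1 : (0:ℝ) < y + 1 := by linarith
      rw [hν, expMeasure_integral hrx (fun x => Real.log (1 + x / (y + 1)))]
      exact integral_log_inner hrx hy1
    have h4 := expMeasure_integral hry (fun y => rexp (mx⁻¹ * (y + 1)) * gE (mx⁻¹ * (y + 1)))
    rw [← h1, h2, h3, hρ, h4]
  constructor
  · intro hne
    have hne' : mx⁻¹ ≠ my⁻¹ := fun h => hne (by
      have := congrArg (fun t : ℝ => t⁻¹) h
      simpa using this)
    rw [key, outer_ne hrx hry hne', hgE (1 / mx) (by positivity), hgE (1 / my) (by positivity),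
      one_div, one_div]
    have hco : my⁻¹ / (my⁻¹ - mx⁻¹) = mx / (mx - my) := by
      have h1 : my⁻¹ - mx⁻¹ ≠ 0 := sub_ne_zero.mpr (Ne.symm hne')
      have h2 : mx - my ≠ 0 := sub_ne_zero.mpr hne
      field_simp
    rw [hco]
  · intro heq
    subst heq
    rw [key, outer_eq hry, hgE (1 / mx) (by positivity), one_div]
    ring
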